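/- If a flat Plebeia tree t satisfies the structural invariants (SI1) and (SI2) and the subnode of t at position k exists and equals t', then t' satisfies the structural invariants and ⟦t'⟧(k') = ⟦t⟧(k ++ k') for every key k'. -/

import Mathlib

/-- A side is `L` or `R`. -/
inductive Side : Type
  | L | R
deriving DecidableEq, Repr

/-- A key is a list of sides. -/
abbrev Key := List Side

/-- The strict order `L < R` on sides. -/
def Side.lt : Side → Side → Prop := fun a b => a = Side.L ∧ b = Side.R

/-- The strict lexicographic order on keys induced by `L < R`. -/
def keyLt : Key → Key → Prop := List.Lex Side.lt

/-- A list of keys is prefix-free: for any two distinct keys in it,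
neither is a prefix of the other. -/
def PrefixFreeList (ks : List Key) : Prop :=
  List.Pairwise (fun a b => ¬ a <+: b ∧ ¬ b <+: a) ks

/-- A set of keys is prefix-free. -/
def PrefixFreeSet (S : Set Key) : Prop :=
  ∀ a ∈ S, ∀ b ∈ S, a ≠ b → ¬ a <+: b

/-- A list of keys is strictly increasing in the lexicographic order. -/
def SortedKeys (ks : List Key) : Prop := List.Pairwise keyLt ks

/-- Key list of an association list is prefix-free and strictly increasing. -/
def GoodKeyList (ks : List Key) : Prop := PrefixFreeList ks ∧ SortedKeys ks

/-- Prepend the key `s` to the key of every entry. -/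
def prependAll {β : Type _} (s : Key) (l : List (Key × β)) : List (Key × β) :=
  l.map (fun e => (s ++ e.1, e.2))

/-- `lookup l k` is `some` of the value of the first entry of `l` with key `k`. -/
def lookupA {β : Type _} (l : List (Key × β)) (k : Key) : Option β :=
  (l.find? (fun e => decide (e.1 = k))).map Prod.snd
/-- Flat Plebeia trees over a value type `α`. -/
inductive FNode (α : Type) : Type
  | leaf : α → FNode α
  | branch : FNode α → FNode α → FNode α
  | extender : Key → FNode α → FNode α

variable {α : Type}

def FNode.isExtender : FNode α → Prop
  | .extender _ _ => True
  | _ => False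

/-- The model `⟦t⟧ : key ⇀ α` of a flat Plebeia tree, as a function into `Option`. -/
def FNode.model : FNode α → Key → Option α
  | .leaf v, [] => some v
  | .leaf _, _ :: _ => none
  | .branch l _, Side.L :: k => l.model k
  | .branch _ r, Side.R :: k => r.model k
  | .branch _ _, [] => none
  | .extender s n, k => if s <+: k then n.model (k.drop s.length) else none

/-- `DOM t`: the set of keys on which `⟦t⟧` is defined. -/
def FNode.dom (t : FNode α) : Set Key := {k | (t.model k).isSome}

/-- Structural invariants (SI1), (SI2) at every subtree:
no extender has an extender as direct child, and no extender has an empty key. -/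
def FNode.inv : FNode α → Prop
  | .leaf _ => True
  | .branch l r => l.inv ∧ r.inv
  | .extender s n => (¬ n.isExtender) ∧ s ≠ [] ∧ n.inv

/-- The subnode of `t` at position `k` (a partial function). -/
def FNode.subAt : FNode α → Key → Option (FNode α)
  | t, [] => some t
  | .branch l _, Side.L :: k => l.subAt k
  | .branch _ r, Side.R :: k => r.subAt k
  | .extender s n, k => if s <+: k then n.subAt (k.drop s.length) else none
  | .leaf _, _ :: _ => none

/-- if `t` satisfies the structural invariants (SI1), (SI2) and the
subnode of `t` at position `k` exists and equals `t'`, then `t'` satisfies the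
structural invariants and `⟦t'⟧(k') = ⟦t⟧(k ++ k')` for every key `k'`. -/
theorem stmt9 {α : Type} (t t' : FNode α) (k : Key) (h : t.inv)
    (hsub : t.subAt k = some t') :
    t'.inv ∧ ∀ k' : Key, t'.model k' = t.model (k ++ k') := by
  induction t generalizing k with
  | leaf v =>
    cases k with
    | nil => simp [FNode.subAt] at hsub; subst hsub; exact ⟨h, fun k' => rfl⟩
    | cons a k => simp [FNode.subAt] at hsub
  | branch l r ihl ihr =>
    cases k with
    | nil => simp [FNode.subAt] at hsub; subst hsub; exact ⟨h, fun k' => rfl⟩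
    | cons a k =>
      cases a with
      | L =>
        obtain ⟨h1, h2⟩ := ihl _ h.1 hsub
        exact ⟨h1, fun k' => by simpa [FNode.model] using h2 k'⟩
      | R =>
        obtain ⟨h1, h2⟩ := ihr _ h.2 hsub
        exact ⟨h1, fun k' => by simpa [FNode.model] using h2 k'⟩
  | extender s n ih =>
    cases k with
    | nil => simp [FNode.subAt] at hsub; subst hsub; exact ⟨h, fun k' => rfl⟩
    | cons a k =>
      rw [show FNode.subAt (.extender s n) (a :: k)
          = if s <+: (a :: k) then n.subAt ((a :: k).drop s.length) else none from by simp only [FNode.subAt]] at hsub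
      split at hsub
      case isTrue hp =>
        obtain ⟨h1, h2⟩ := ih _ h.2.2 hsub
        refine ⟨h1, fun k' => ?_⟩
        rw [h2 k']
        have hp' : s <+: (a :: k) ++ k' := hp.trans (List.prefix_append _ _)
        rw [show FNode.model (.extender s n) ((a :: k) ++ k')
            = if s <+: ((a :: k) ++ k') then n.model (((a :: k) ++ k').drop s.length) else none from rfl,
          if_pos hp']
        obtain ⟨u, hu⟩ := hp
        congr 1
        rw [← hu, List.append_assoc, List.drop_append, List.drop_append]
        simp
      case isFalse => exact absurd hsub (by simp)
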